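/- Let L be a Lie superalgebra over a field of characteristic ≠ 2 and δ : L × L → L a super-biderivation. Then for all homogeneous u, x, y ∈ L, the element δ(u,[x,y]) − (-1)^{|δ||u|}[u, δ(x,y)] lies in the centralizer Z_L(L') of the derived subalgebra L' = [L,L], i.e., it commutes with all brackets [z,w]. -/

import Mathlib

/-- The sign `(-1)^(i*j)` for degrees `i j : ZMod 2`, as an element of the field `F`. -/
def ssign (F : Type*) [Field F] (i j : ZMod 2) : F :=
  if i * j = 1 then -1 else 1

/-- A Lie superalgebra structure on an `F`-module `L`: a bilinear bracket together with a
`ZMod 2`-grading by submodules, such that the bracket is graded, super-skewsymmetric and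
satisfies the super Jacobi identity on homogeneous elements. -/
structure LieSuperAlg (F : Type*) [Field F] (L : Type*) [AddCommGroup L] [Module F L] where
  br : L → L → L
  br_add_left : ∀ x y z : L, br (x + y) z = br x z + br y z
  br_smul_left : ∀ (c : F) (x z : L), br (c • x) z = c • br x z
  br_add_right : ∀ x y z : L, br x (y + z) = br x y + br x z
  br_smul_right : ∀ (c : F) (x z : L), br x (c • z) = c • br x z
  G : ZMod 2 → Submodule F L
  isInternal : DirectSum.IsInternal G
  br_deg : ∀ {i j : ZMod 2} {x y : L}, x ∈ G i → y ∈ G j → br x y ∈ G (i + j)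
  super_skew : ∀ {i j : ZMod 2} {x y : L}, x ∈ G i → y ∈ G j →
    br x y = -(ssign F i j • br y x)
  super_jacobi : ∀ {i j k : ZMod 2} {x y z : L}, x ∈ G i → y ∈ G j → z ∈ G k →
    br x (br y z) = br (br x y) z + ssign F i j • br y (br x z)

variable {F : Type*} [Field F] {L : Type*} [AddCommGroup L] [Module F L]

/-- `δ : L × L → L` is a super-biderivation of degree `τ`. -/
structure IsSuperBiderivation (A : LieSuperAlg F L) (τ : ZMod 2) (δ : L → L → L) : Prop where
  add_left : ∀ x y z : L, δ (x + y) z = δ x z + δ y z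
  smul_left : ∀ (c : F) (x z : L), δ (c • x) z = c • δ x z
  add_right : ∀ x y z : L, δ x (y + z) = δ x y + δ x z
  smul_right : ∀ (c : F) (x z : L), δ x (c • z) = c • δ x z
  deg : ∀ {i j : ZMod 2} {x y : L}, x ∈ A.G i → y ∈ A.G j → δ x y ∈ A.G (i + j + τ)
  skew : ∀ {i j : ZMod 2} {x y : L}, x ∈ A.G i → y ∈ A.G j →
    δ x y = -(ssign F i j • δ y x)
  leibniz : ∀ {i j k : ZMod 2} {x y z : L}, x ∈ A.G i → y ∈ A.G j → z ∈ A.G k →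
    δ (A.br x y) z = ssign F τ i • A.br x (δ y z) + ssign F j k • A.br (δ x z) y

/-- `f : L → L` is an even linear super-commuting map. -/
structure IsSuperCommuting (A : LieSuperAlg F L) (f : L → L) : Prop where
  map_add : ∀ x y : L, f (x + y) = f x + f y
  map_smul : ∀ (c : F) (x : L), f (c • x) = c • f x
  even : ∀ {i : ZMod 2} {x : L}, x ∈ A.G i → f x ∈ A.G i
  comm : ∀ x y : L, A.br (f x) y = A.br x (f y)

/-- `γ : L → L` is a homogeneous element of the centroid `Γ(L)`, of degree `τ`. -/
structure InCentroid (A : LieSuperAlg F L) (τ : ZMod 2) (γ : L → L) : Prop where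
  map_add : ∀ x y : L, γ (x + y) = γ x + γ y
  map_smul : ∀ (c : F) (x : L), γ (c • x) = c • γ x
  deg : ∀ {i : ZMod 2} {x : L}, x ∈ A.G i → γ x ∈ A.G (i + τ)
  centroid : ∀ {i j : ZMod 2} {x y : L}, x ∈ A.G i → y ∈ A.G j →
    γ (A.br x y) = ssign F τ i • A.br x (γ y)

/-- The derived subalgebra `L' = [L, L]`, the span of all brackets. -/
def derived (A : LieSuperAlg F L) : Submodule F L :=
  Submodule.span F {z : L | ∃ x y : L, z = A.br x y}

/-- The center `Z(L)` as a submodule. -/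
def centerSub (A : LieSuperAlg F L) : Submodule F L where
  carrier := {v : L | ∀ x : L, A.br x v = 0}
  add_mem' := by
    intro a b ha hb x
    rw [A.br_add_right, ha x, hb x, add_zero]
  zero_mem' := by
    intro x
    simpa using A.br_smul_right (0 : F) x 0
  smul_mem' := by
    intro c a ha x
    rw [A.br_smul_right, ha x, smul_zero]

private lemma zm2 : ∀ n : ZMod 2, n = 0 ∨ n = 1 := by decide
private lemma za00 : (0+0 : ZMod 2) = 0 := by decide
private lemma za01 : (0+1 : ZMod 2) = 1 := by decide
private lemma za10 : (1+0 : ZMod 2) = 1 := by decide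
private lemma za11 : (1+1 : ZMod 2) = 0 := by decide
private lemma ss00 : ssign F 0 0 = 1 := by norm_num [ssign]
private lemma ss01 : ssign F 0 1 = 1 := by norm_num [ssign]
private lemma ss10 : ssign F 1 0 = 1 := by norm_num [ssign]
private lemma ss11 : ssign F 1 1 = -1 := by norm_num [ssign]

section helpers
variable (A : LieSuperAlg F L)

private lemma br_smul_r (c : F) (x z : L) : A.br x (c • z) = c • A.br x z := A.br_smul_right c x z
private lemma br_smul_l (c : F) (x z : L) : A.br (c • x) z = c • A.br x z := A.br_smul_left c x z
private lemma br_add_r (x y z : L) : A.br x (y + z) = A.br x y + A.br x z := A.br_add_right x y z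
private lemma br_add_l (x y z : L) : A.br (x + y) z = A.br x z + A.br y z := A.br_add_left x y z
private lemma br_neg_r (x z : L) : A.br x (-z) = -A.br x z := by
  have h := A.br_smul_right (-1) x z
  rwa [neg_one_smul, neg_one_smul] at h
private lemma br_neg_l (x z : L) : A.br (-x) z = -A.br x z := by
  have h := A.br_smul_left (-1) x z
  rwa [neg_one_smul, neg_one_smul] at h
private lemma br_zero_r (x : L) : A.br x 0 = 0 := by
  have h := A.br_smul_right 0 x 0
  rwa [zero_smul, zero_smul] at h
private lemma br_zero_l (x : L) : A.br 0 x = 0 := by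
  have h := A.br_smul_left 0 0 x
  rwa [zero_smul, zero_smul] at h
private lemma br_sub_r (x a b : L) : A.br x (a - b) = A.br x a - A.br x b := by
  rw [sub_eq_add_neg, A.br_add_right, br_neg_r, sub_eq_add_neg]

private lemma L2 {τ : ZMod 2} {δ : L → L → L} (hδ : IsSuperBiderivation A τ δ)
    {i j k : ZMod 2} {x y z : L} (hx : x ∈ A.G i) (hy : y ∈ A.G j) (hz : z ∈ A.G k) :
    δ x (A.br y z) = A.br (δ x y) z + ssign F (i+τ) j • A.br y (δ x z) := by
  have h1 := hδ.skew hx (A.br_deg hy hz)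
  have h2 := hδ.leibniz hy hz hx
  have h3 : A.br y (δ z x) = -(ssign F k i • A.br y (δ x z)) := by
    rw [hδ.skew hz hx, br_neg_r, br_smul_r]
  have h4 : A.br (δ y x) z = -(ssign F j i • A.br (δ x y) z) := by
    rw [hδ.skew hy hx, br_neg_l, br_smul_l]
  linear_combination (norm := (rcases (zm2 i) with rfl|rfl <;> rcases (zm2 j) with rfl|rfl <;>
      rcases (zm2 k) with rfl|rfl <;> rcases (zm2 τ) with rfl|rfl <;>
      simp only [za00, za01, za10, za11, ss00, ss01, ss10, ss11] <;> module))
    h1 - (ssign F i j * ssign F i k) • h2 - (ssign F i j * ssign F i k * ssign F j τ) • h3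
      - (ssign F i j) • h4

end helpers

section main
variable (A : LieSuperAlg F L) {τ : ZMod 2} {δ : L → L → L}

set_option maxHeartbeats 2000000 in
private lemma starR (hδ : IsSuperBiderivation A τ δ)
    {d1 d2 d3 d4 : ZMod 2} {X Y U V : L}
    (hX : X ∈ A.G d1) (hY : Y ∈ A.G d2) (hU : U ∈ A.G d3) (hV : V ∈ A.G d4) :
    A.br (δ X Y) (A.br U V) - ssign F τ (d1+d2) • A.br (A.br X Y) (δ U V)
      = (ssign F d1 d3 * ssign F d1 d2 * ssign F d3 d2) •
        (A.br (δ U Y) (A.br X V) - ssign F τ (d3+d2) • A.br (A.br U Y) (δ X V)) := by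
  have hW1a := hδ.leibniz hX hU (A.br_deg hY hV)
  have hW1b : A.br X (δ U (A.br Y V))
      = A.br X (A.br (δ U Y) V) + ssign F (d3+τ) d2 • A.br X (A.br Y (δ U V)) := by
    rw [L2 A hδ hU hY hV, br_add_r, br_smul_r]
  have hW1c : A.br (δ X (A.br Y V)) U
      = A.br (A.br (δ X Y) V) U + ssign F (d1+τ) d2 • A.br (A.br Y (δ X V)) U := by
    rw [L2 A hδ hX hY hV, br_add_l, br_smul_l]
  have hW2a := L2 A hδ (A.br_deg hX hU) hY hV
  have hW2b : A.br (δ (A.br X U) Y) V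
      = ssign F τ d1 • A.br (A.br X (δ U Y)) V + ssign F d3 d2 • A.br (A.br (δ X Y) U) V := by
    rw [hδ.leibniz hX hU hY, br_add_l, br_smul_l, br_smul_l]
  have hW2c : A.br Y (δ (A.br X U) V)
      = ssign F τ d1 • A.br Y (A.br X (δ U V)) + ssign F d3 d4 • A.br Y (A.br (δ X V) U) := by
    rw [hδ.leibniz hX hU hV, br_add_r, br_smul_r, br_smul_r]
  have hJ1 := A.super_jacobi hX (hδ.deg hU hY) hV
  have hJ2 := A.super_jacobi hX hY (hδ.deg hU hV)
  have hJ3 := A.super_jacobi (hδ.deg hX hY) hV hU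
  have hS3 : A.br (δ X Y) (A.br V U) = -(ssign F d4 d3 • A.br (δ X Y) (A.br U V)) := by
    rw [A.super_skew hV hU, br_neg_r, br_smul_r]
  have hS4 := A.super_skew (A.br_deg (hδ.deg hX hY) hU) hV
  have hJ5 := A.super_jacobi hY (hδ.deg hX hV) hU
  have hS6 : A.br (δ X V) (A.br Y U) = -(ssign F d2 d3 • A.br (δ X V) (A.br U Y)) := by
    rw [A.super_skew hY hU, br_neg_r, br_smul_r]
  have hS5 := A.super_skew (A.br_deg hU hY) (hδ.deg hX hV)
  linear_combination (norm := (rcases (zm2 d1) with rfl|rfl <;> rcases (zm2 d2) with rfl|rfl <;>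
      rcases (zm2 d3) with rfl|rfl <;> rcases (zm2 d4) with rfl|rfl <;>
      rcases (zm2 τ) with rfl|rfl <;>
      simp only [za00, za01, za10, za11, ss00, ss01, ss10, ss11] <;> module))
    (ssign F d3 d2) • hW1a + (ssign F d1 τ * ssign F d3 d2) • hW1b + (ssign F d3 d4) • hW1c
    - (ssign F d3 d2) • hW2a - (ssign F d3 d2) • hW2b - (ssign F d1 d2 * ssign F d2 τ) • hW2c
    + (ssign F d1 τ * ssign F d3 d2) • hJ1 + (ssign F d1 τ * ssign F d2 τ) • hJ2
    - (ssign F d3 d4) • hJ3 + (ssign F d3 d4) • hS3 - hS4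
    - (ssign F d1 d2 * ssign F d3 d4 * ssign F d2 τ) • hJ5
    - (ssign F d3 d4 * ssign F d2 d4) • hS6
    + (ssign F d1 d3 * ssign F d1 d2 * ssign F d3 d2 * ssign F d3 τ * ssign F d2 τ) • hS5

end main

section main2
variable (A : LieSuperAlg F L) {τ : ZMod 2} {δ : L → L → L}

set_option maxHeartbeats 2000000 in
private lemma lemA (h2 : (2 : F) ≠ 0) (hδ : IsSuperBiderivation A τ δ)
    {a b c d : ZMod 2} {x u y v : L}
    (hx : x ∈ A.G a) (hu : u ∈ A.G b) (hy : y ∈ A.G c) (hv : v ∈ A.G d) :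
    A.br (δ x u) (A.br y v) = ssign F τ (a+b) • A.br (A.br x u) (δ y v) := by
  have e1 := starR A hδ hy hx hu hv
  have e2 := starR A hδ hx hy hu hv
  have e3 := starR A hδ hy hu hx hv
  have sk1 : A.br (δ y x) (A.br u v) = -(ssign F c a • A.br (δ x y) (A.br u v)) := by
    rw [hδ.skew hy hx, br_neg_l, br_smul_l]
  have sk2 : A.br (A.br y x) (δ u v) = -(ssign F c a • A.br (A.br x y) (δ u v)) := by
    rw [A.super_skew hy hx, br_neg_l, br_smul_l]
  have sk3 : A.br (δ u x) (A.br y v) = -(ssign F b a • A.br (δ x u) (A.br y v)) := by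
    rw [hδ.skew hu hx, br_neg_l, br_smul_l]
  have sk4 : A.br (A.br u x) (δ y v) = -(ssign F b a • A.br (A.br x u) (δ y v)) := by
    rw [A.super_skew hu hx, br_neg_l, br_smul_l]
  have sk5 : A.br (δ u y) (A.br x v) = -(ssign F b c • A.br (δ y u) (A.br x v)) := by
    rw [hδ.skew hu hy, br_neg_l, br_smul_l]
  have sk6 : A.br (A.br u y) (δ x v) = -(ssign F b c • A.br (A.br y u) (δ x v)) := by
    rw [A.super_skew hu hy, br_neg_l, br_smul_l]
  have key : (2:F) • (A.br (δ x u) (A.br y v) - ssign F τ (a+b) • A.br (A.br x u) (δ y v)) = 0 := by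
    linear_combination (norm := (rcases (zm2 a) with rfl|rfl <;> rcases (zm2 b) with rfl|rfl <;>
        rcases (zm2 c) with rfl|rfl <;> rcases (zm2 d) with rfl|rfl <;>
        rcases (zm2 τ) with rfl|rfl <;>
        simp only [za00, za01, za10, za11, ss00, ss01, ss10, ss11] <;> module))
      (ssign F a c * ssign F b c) • e1 + (ssign F b c) • e2
      - (ssign F a b * ssign F a c * ssign F b c) • e3
      - (ssign F a c * ssign F b c) • sk1
      + (ssign F a c * ssign F a τ * ssign F b c * ssign F c τ) • sk2
      + (ssign F a b) • sk3
      - (ssign F a b * ssign F a τ * ssign F b τ) • sk4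
      + (ssign F a b * ssign F a c) • sk5
      - (ssign F a b * ssign F a c * ssign F b τ * ssign F c τ) • sk6
  rcases smul_eq_zero.mp key with h | h
  · exact absurd h h2
  · exact sub_eq_zero.mp h

end main2

section main3
variable (A : LieSuperAlg F L) {τ : ZMod 2} {δ : L → L → L}

set_option maxHeartbeats 4000000 in
private lemma keyR (h2 : (2 : F) ≠ 0) (hδ : IsSuperBiderivation A τ δ)
    {i j k l m : ZMod 2} {u x y z w : L}
    (hu : u ∈ A.G i) (hx : x ∈ A.G j) (hy : y ∈ A.G k) (hz : z ∈ A.G l) (hw : w ∈ A.G m) :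
    A.br (A.br u x) (δ y (A.br z w)) - ssign F τ k • A.br (A.br u x) (A.br y (δ z w))
      = (ssign F j k * ssign F τ (j+k)) •
        (A.br (A.br u y) (δ x (A.br z w)) - ssign F τ j • A.br (A.br u y) (A.br x (δ z w))) := by
  have s1 := lemA A h2 hδ hu (A.br_deg hx hy) hz hw
  have cl2a : A.br (δ u (A.br x y)) (A.br z w)
      = A.br (A.br (δ u x) y) (A.br z w) + ssign F (i+τ) j • A.br (A.br x (δ u y)) (A.br z w) := by
    rw [L2 A hδ hu hx hy, br_add_l, br_smul_l]
  have jT1 := A.super_jacobi (hδ.deg hu hx) hy (A.br_deg hz hw)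
  have laT1a := lemA A h2 hδ hu hx hy (A.br_deg hz hw)
  have cT1b : A.br y (A.br (δ u x) (A.br z w))
      = ssign F τ (i+j) • A.br y (A.br (A.br u x) (δ z w)) := by
    rw [lemA A h2 hδ hu hx hz hw, br_smul_r]
  have jP1 := A.super_jacobi (A.br_deg hu hx) hy (hδ.deg hz hw)
  have jT2 := A.super_jacobi hx (hδ.deg hu hy) (A.br_deg hz hw)
  have laT2a := lemA A h2 hδ hu hy hx (A.br_deg hz hw)
  have cT2b : A.br x (A.br (δ u y) (A.br z w))
      = ssign F τ (i+k) • A.br x (A.br (A.br u y) (δ z w)) := by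
    rw [lemA A h2 hδ hu hy hz hw, br_smul_r]
  have jP2 := A.super_jacobi hx (A.br_deg hu hy) (hδ.deg hz hw)
  have cFin : A.br (A.br u (A.br x y)) (δ z w)
      = A.br (A.br (A.br u x) y) (δ z w) + ssign F i j • A.br (A.br x (A.br u y)) (δ z w) := by
    rw [A.super_jacobi hu hx hy, br_add_l, br_smul_l]
  linear_combination (norm := (rcases (zm2 i) with rfl|rfl <;> rcases (zm2 j) with rfl|rfl <;>
      rcases (zm2 k) with rfl|rfl <;> rcases (zm2 l) with rfl|rfl <;>
      rcases (zm2 m) with rfl|rfl <;> rcases (zm2 τ) with rfl|rfl <;>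
      simp only [za00, za01, za10, za11, ss00, ss01, ss10, ss11] <;> module))
    (ssign F i τ * ssign F j τ) • s1 - (ssign F i τ * ssign F j τ) • cl2a
    + (ssign F i τ * ssign F j τ) • jT1 - (ssign F i τ * ssign F j τ) • laT1a
    + (ssign F i k * ssign F i τ * ssign F j k * ssign F j τ * ssign F k τ) • cT1b
    - (ssign F k τ) • jP1
    + (ssign F i j * ssign F i τ) • jT2
    + (ssign F i τ * ssign F j k * ssign F j τ) • laT2a
    - (ssign F i j * ssign F i τ) • cT2b
    - (ssign F i j * ssign F k τ) • jP2
    + (ssign F k τ) • cFin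

end main3

section main4
variable (A : LieSuperAlg F L) {τ : ZMod 2} {δ : L → L → L}

set_option maxHeartbeats 4000000 in
private lemma core (h2 : (2 : F) ≠ 0) (hδ : IsSuperBiderivation A τ δ)
    {i j k l m : ZMod 2} {u x y p q : L}
    (hu : u ∈ A.G i) (hx : x ∈ A.G j) (hy : y ∈ A.G k) (hp : p ∈ A.G l) (hq : q ∈ A.G m) :
    A.br (A.br p q) (δ u (A.br x y) - ssign F τ i • A.br u (δ x y)) = 0 := by
  have r1 := keyR A h2 hδ hp hq hu hx hy
  have r2 := keyR A h2 hδ hu hp hq hx hy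
  have r3 := keyR A h2 hδ hq hu hp hx hy
  have skA1 : A.br (A.br p u) (δ q (A.br x y))
      = -(ssign F l i • A.br (A.br u p) (δ q (A.br x y))) := by
    rw [A.super_skew hp hu, br_neg_l, br_smul_l]
  have skA2 : A.br (A.br p u) (A.br q (δ x y))
      = -(ssign F l i • A.br (A.br u p) (A.br q (δ x y))) := by
    rw [A.super_skew hp hu, br_neg_l, br_smul_l]
  have skB1 : A.br (A.br u q) (δ p (A.br x y))
      = -(ssign F i m • A.br (A.br q u) (δ p (A.br x y))) := by
    rw [A.super_skew hu hq, br_neg_l, br_smul_l]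
  have skB2 : A.br (A.br u q) (A.br p (δ x y))
      = -(ssign F i m • A.br (A.br q u) (A.br p (δ x y))) := by
    rw [A.super_skew hu hq, br_neg_l, br_smul_l]
  have skC1 : A.br (A.br q p) (δ u (A.br x y))
      = -(ssign F m l • A.br (A.br p q) (δ u (A.br x y))) := by
    rw [A.super_skew hq hp, br_neg_l, br_smul_l]
  have skC2 : A.br (A.br q p) (A.br u (δ x y))
      = -(ssign F m l • A.br (A.br p q) (A.br u (δ x y))) := by
    rw [A.super_skew hq hp, br_neg_l, br_smul_l]
  have key : (2:F) • (A.br (A.br p q) (δ u (A.br x y))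
      - ssign F τ i • A.br (A.br p q) (A.br u (δ x y))) = 0 := by
    linear_combination (norm := (rcases (zm2 i) with rfl|rfl <;> rcases (zm2 j) with rfl|rfl <;>
        rcases (zm2 k) with rfl|rfl <;> rcases (zm2 l) with rfl|rfl <;>
        rcases (zm2 m) with rfl|rfl <;> rcases (zm2 τ) with rfl|rfl <;>
        simp only [za00, za01, za10, za11, ss00, ss01, ss10, ss11] <;> module))
      r1 - (ssign F i l * ssign F i m * ssign F i τ * ssign F m τ) • r2
      + (ssign F i l * ssign F i τ * ssign F l m * ssign F l τ) • r3
      + (ssign F i m * ssign F i τ * ssign F m τ) • skA1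
      - (ssign F i m * ssign F i τ) • skA2
      - (ssign F i l * ssign F i m * ssign F i τ * ssign F l m * ssign F l τ) • skB1
      + (ssign F i l * ssign F i m * ssign F i τ * ssign F l m) • skB2
      + (ssign F l m) • skC1
      - (ssign F i τ * ssign F l m) • skC2
  rw [br_sub_r, br_smul_r]
  rcases smul_eq_zero.mp key with h | h
  · exact absurd h h2
  · exact h

end main4

theorem stmt3 (h2 : (2 : F) ≠ 0) (A : LieSuperAlg F L) (τ : ZMod 2) (δ : L → L → L)
    (hδ : IsSuperBiderivation A τ δ) {i j k : ZMod 2} {u x y : L}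
    (hu : u ∈ A.G i) (hx : x ∈ A.G j) (hy : y ∈ A.G k) :
    ∀ p ∈ derived A, A.br p (δ u (A.br x y) - ssign F τ i • A.br u (δ x y)) = 0 := by
  intro p hp
  have htop : (⨆ n, A.G n) = ⊤ := A.isInternal.submodule_iSup_eq_top
  have hmem : ∀ c : L, c ∈ ⨆ n, A.G n := by
    intro c; rw [htop]; exact Submodule.mem_top
  have hbr : ∀ a b : L, A.br (A.br a b) (δ u (A.br x y) - ssign F τ i • A.br u (δ x y)) = 0 := by
    intro a b
    refine Submodule.iSup_induction (motive := fun a' =>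
      A.br (A.br a' b) (δ u (A.br x y) - ssign F τ i • A.br u (δ x y)) = 0) A.G (hmem a)
      ?_ ?_ ?_
    · intro n a' ha'
      refine Submodule.iSup_induction (motive := fun b' =>
        A.br (A.br a' b') (δ u (A.br x y) - ssign F τ i • A.br u (δ x y)) = 0) A.G (hmem b)
        ?_ ?_ ?_
      · intro n' b' hb'
        exact core A h2 hδ hu hx hy ha' hb'
      · show A.br (A.br a' 0) (δ u (A.br x y) - ssign F τ i • A.br u (δ x y)) = 0
        rw [br_zero_r, br_zero_l]
      · intro v1 v2 hv1 hv2
        show A.br (A.br a' (v1 + v2)) (δ u (A.br x y) - ssign F τ i • A.br u (δ x y)) = 0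
        rw [A.br_add_right, A.br_add_left, hv1, hv2, add_zero]
    · show A.br (A.br 0 b) (δ u (A.br x y) - ssign F τ i • A.br u (δ x y)) = 0
      rw [br_zero_l, br_zero_l]
    · intro v1 v2 hv1 hv2
      show A.br (A.br (v1 + v2) b) (δ u (A.br x y) - ssign F τ i • A.br u (δ x y)) = 0
      rw [A.br_add_left, A.br_add_left, hv1, hv2, add_zero]
  have hp' : p ∈ Submodule.span F {z : L | ∃ a b : L, z = A.br a b} := hp
  refine Submodule.span_induction ?_ ?_ ?_ ?_ hp'
  · rintro q ⟨a, b, rfl⟩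
    exact hbr a b
  · exact br_zero_l A _
  · intro q r _ _ hq hr
    rw [A.br_add_left, hq, hr, add_zero]
  · intro c q _ hq
    rw [A.br_smul_left, hq, smul_zero]
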